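/- Let q be a power of 2 and let 𝔽_q be the finite field with q elements. Then there exists an irreducible λ-quiddity over 𝔽_q of size 4, and every irreducible λ-quiddity over 𝔽_q has size at most q² + 1. -/

import Mathlib

/-- The matrix `[[a, -1], [1, 0]]`. -/
def mMat {A : Type*} [CommRing A] (a : A) : Matrix (Fin 2) (Fin 2) A := !![a, -1; 1, 0]

/-- `M_n(a₁, …, aₙ) = mMat aₙ * ⋯ * mMat a₁`, for the tuple given as a list `[a₁, …, aₙ]`. -/
def mProd {A : Type*} [CommRing A] (l : List A) : Matrix (Fin 2) (Fin 2) A :=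
  ((l.map mMat).reverse).prod

/-- The sum `(a₁,…,aₙ) ⊕ (b₁,…,b_m) = (a₁+b_m, a₂,…,a_{n−1}, aₙ+b₁, b₂,…,b_{m−1})`. -/
def oplus {A : Type*} [CommRing A] (a b : List A) : List A :=
  (a.headD 0 + b.getLastD 0) ::
    (a.dropLast.tail ++ (a.getLastD 0 + b.headD 0) :: b.dropLast.tail)

/-- Two tuples are equivalent if one is a cyclic rotation of the other or of its reversal. -/
def TupEquiv {A : Type*} (a b : List A) : Prop :=
  (∃ k, b = a.rotate k) ∨ (∃ k, b = a.reverse.rotate k)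

/-- A λ-quiddity over `R ⊆ A`: all entries lie in `R` and `M_n(a₁,…,aₙ) = ± Id`. -/
def IsQuiddity {A : Type*} [CommRing A] (R : Set A) (c : List A) : Prop :=
  (∀ x ∈ c, x ∈ R) ∧ (mProd c = 1 ∨ mProd c = -1)

/-- A λ-quiddity `c` over `R` is reducible if `c ∼ a ⊕ b` with `a ∈ R^m`, `m ≥ 3`,
and `b` a λ-quiddity over `R` of size `l ≥ 3`. -/
def IsReducible {A : Type*} [CommRing A] (R : Set A) (c : List A) : Prop :=
  ∃ a b : List A, 3 ≤ a.length ∧ 3 ≤ b.length ∧ (∀ x ∈ a, x ∈ R) ∧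
    IsQuiddity R b ∧ TupEquiv c (oplus a b)

/-- An irreducible λ-quiddity over `R`: a λ-quiddity of size `≥ 3` which is not reducible. -/
def IrreducibleQuiddity {A : Type*} [CommRing A] (R : Set A) (c : List A) : Prop :=
  IsQuiddity R c ∧ 3 ≤ c.length ∧ ¬ IsReducible R c

/-- The continuant `K_i(a₁,…,a_i)`, determinant of the tridiagonal matrix with diagonal
`a₁,…,a_i` and off-diagonal entries `1`; `K₀ = 1`. -/
def cont {A : Type*} [CommRing A] : List A → A
  | [] => 1
  | [a] => a
  | a :: b :: l => a * cont (b :: l) - cont l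

lemma mProd_append {A : Type*} [CommRing A] (l l' : List A) :
    mProd (l ++ l') = mProd l' * mProd l := by
  simp [mProd, List.reverse_append]

lemma mProd_singleton {A : Type*} [CommRing A] (a : A) : mProd [a] = mMat a := by
  simp [mProd]

lemma mProd_det {A : Type*} [CommRing A] (l : List A) : (mProd l).det = 1 := by
  induction l with
  | nil => simp [mProd]
  | cons a t ih =>
      have : (a :: t) = [a] ++ t := rfl
      rw [this, mProd_append, Matrix.det_mul, ih, mProd_singleton]
      simp [mMat, Matrix.det_fin_two_of]

lemma getLastD_eq {A : Type*} (l : List A) (h : l ≠ []) (d : A) :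
    l.getLastD d = l.getLast h := by
  conv_lhs => rw [← List.dropLast_append_getLast h]
  rw [List.getLastD_concat]

lemma list_decomp {A : Type*} (e : List A) (h : 2 ≤ e.length) (d : A) :
    e.headD d :: (e.tail.dropLast ++ [e.getLastD d]) = e := by
  match e, h with
  | a :: t, h =>
    have ht : t ≠ [] := by
      intro hh; rw [hh] at h; simp at h
    simp only [List.headD_cons, List.tail_cons]
    have : (a :: t).getLastD d = t.getLast ht := by
      rw [getLastD_eq (a :: t) (by simp) d, List.getLast_cons ht]
    rw [this, List.dropLast_append_getLast ht]

lemma reducible_of_rep {F : Type*} [Field F] (h2 : (2 : F) = 0) (c : List F)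
    (i j : ℕ) (hij : i < j) (hj3 : j + 3 ≤ c.length)
    (h00 : (mProd (c.take i)) 0 0 = (mProd (c.take j)) 0 0)
    (h01 : (mProd (c.take i)) 0 1 = (mProd (c.take j)) 0 1) :
    IsReducible Set.univ c := by
  set n := c.length with hn
  set β : List F := (c.take j).drop i with hβ
  set N : Matrix (Fin 2) (Fin 2) F := mProd β with hNdef
  have hjn : j ≤ n := by omega
  have hsplit : c.take i ++ β = c.take j := by
    have h1 : (c.take j).take i = c.take i := by
      rw [List.take_take]; congr 1; omega
    rw [← h1, List.take_append_drop]
  have hNP : N * mProd (c.take i) = mProd (c.take j) := by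
    rw [← mProd_append, hsplit]
  have hdetN : N.det = 1 := mProd_det β
  have hN00 : N 0 0 = 1 := by
    have hd := mProd_det (c.take i)
    rw [Matrix.det_fin_two] at hd
    have e1 := congrFun (congrFun hNP 0) 0
    have e2 := congrFun (congrFun hNP 0) 1
    simp only [Matrix.mul_apply, Fin.sum_univ_two] at e1 e2
    rw [← h00] at e1
    rw [← h01] at e2
    linear_combination (mProd (c.take i) 1 1) * e1 - (mProd (c.take i) 1 0) * e2
      + (1 - N 0 0) * hd
  set x : F := N 0 1 with hx
  set y : F := N 1 0 with hy
  have hN11 : N 1 1 = 1 + x * y := by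
    rw [Matrix.det_fin_two, hN00] at hdetN
    linear_combination hdetN
  have hNmat : N = !![(1:F), x; y, 1 + x*y] := by
    ext a b
    fin_cases a <;> fin_cases b <;>
      simp [hN00, hN11, hx, hy]
  have hkey : mMat y * N * mMat x = -1 := by
    rw [hNmat]
    ext a b
    fin_cases a <;> fin_cases b <;>
      · simp [mMat, Matrix.mul_apply, Fin.sum_univ_two, Matrix.one_apply]
        try ring_nf
        try linear_combination x * h2
  set L := j - i with hL
  set m := n - L with hm
  have hm3 : 3 ≤ m := by omega
  set d : List F := c.rotate j with hd
  have hdlen : d.length = n := List.length_rotate c j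
  set e : List F := d.take m with he
  have helen : e.length = m := by
    rw [he, List.length_take, hdlen]; omega
  have hβlen : β.length = L := by
    rw [hβ, List.length_drop, List.length_take]; omega
  have hdβ : d.drop m = β := by
    rw [hd, List.rotate_eq_drop_append_take hjn]
    have hml : m = (c.drop j).length + i := by
      rw [List.length_drop]; omega
    rw [hml, List.drop_append, List.drop_eq_nil_of_le (by omega), List.nil_append,
      Nat.add_sub_cancel_left]
  have heβ : e ++ β = d := by
    conv_rhs => rw [← List.take_append_drop m d]
    rw [hdβ]
  set a : List F := (e.headD 0 - y) :: (e.tail.dropLast ++ [e.getLastD 0 - x]) with ha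
  set b : List F := x :: (β ++ [y]) with hb
  have halen : a.length = m := by
    rw [ha]; simp [List.length_dropLast, List.length_tail, helen]; omega
  have hblen : b.length = L + 2 := by
    rw [hb]; simp [hβlen]
  have hoplus : oplus a b = d := by
    rw [oplus, ha, hb]
    simp only [List.headD_cons, List.tail_cons]
    have h1 : ((e.headD 0 - y) :: (e.tail.dropLast ++ [e.getLastD 0 - x])).dropLast.tail
        = e.tail.dropLast := by
      rw [show ((e.headD 0 - y) :: (e.tail.dropLast ++ [e.getLastD 0 - x]))
        = ((e.headD 0 - y) :: e.tail.dropLast) ++ [e.getLastD 0 - x] from rfl,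
        List.dropLast_concat, List.tail_cons]
    have h2' : ((e.headD 0 - y) :: (e.tail.dropLast ++ [e.getLastD 0 - x])).getLastD 0
        = e.getLastD 0 - x := by
      rw [show ((e.headD 0 - y) :: (e.tail.dropLast ++ [e.getLastD 0 - x]))
        = ((e.headD 0 - y) :: e.tail.dropLast) ++ [e.getLastD 0 - x] from rfl,
        List.getLastD_concat]
    have h3 : (x :: (β ++ [y])).getLastD 0 = y := by
      rw [show (x :: (β ++ [y])) = (x :: β) ++ [y] from rfl, List.getLastD_concat]
    have h4 : (x :: (β ++ [y])).dropLast.tail = β := by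
      rw [show (x :: (β ++ [y])) = (x :: β) ++ [y] from rfl, List.dropLast_concat,
        List.tail_cons]
    rw [h1, h2', h3, h4]
    have : e.headD 0 - y + y = e.headD 0 := by ring
    rw [this]
    have : e.getLastD 0 - x + x = e.getLastD 0 := by ring
    rw [this]
    rw [← heβ]
    rw [show e.headD 0 :: (e.tail.dropLast ++ e.getLastD 0 :: β)
      = (e.headD 0 :: (e.tail.dropLast ++ [e.getLastD 0])) ++ β by rw [List.cons_append, List.append_assoc]; rfl]
    rw [list_decomp e (by omega) 0]
  refine ⟨a, b, by omega, by omega, fun _ _ => trivial, ⟨fun _ _ => trivial, Or.inr ?_⟩,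
    Or.inl ⟨j, by rw [hoplus, hd]⟩⟩
  rw [hb, show (x :: (β ++ [y])) = [x] ++ (β ++ [y]) from rfl, mProd_append, mProd_append,
    mProd_singleton, mProd_singleton, ← hNdef, ← hkey, mul_assoc]

lemma oplus_length {A : Type*} [CommRing A] (a b : List A) (ha : 3 ≤ a.length)
    (hb : 3 ≤ b.length) : (oplus a b).length = a.length + b.length - 2 := by
  rw [oplus]
  simp only [List.length_cons, List.length_append, List.length_dropLast, List.length_tail]
  omega

lemma four_zeros {F : Type*} [Field F] (h2 : (2 : F) = 0) :
    IrreducibleQuiddity (Set.univ : Set F) [0, 0, 0, 0] := by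
  refine ⟨⟨fun _ _ => trivial, Or.inl ?_⟩, by norm_num, ?_⟩
  · show mProd [0,0,0,0] = 1
    rw [mProd]
    simp only [List.map_cons, List.map_nil, List.reverse_cons, List.reverse_nil,
      List.nil_append, List.cons_append, List.prod_cons, List.prod_nil, mul_one]
    ext a b
    fin_cases a <;> fin_cases b <;>
      simp [mMat, Matrix.mul_apply, Fin.sum_univ_two, Matrix.one_apply]
  · rintro ⟨a, b, ha, hb, -, hbq, heq⟩
    have hlen : (oplus a b).length = 4 := by
      rcases heq with ⟨k, hk⟩ | ⟨k, hk⟩ <;> rw [hk] <;> simp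
    rw [oplus_length a b ha hb] at hlen
    have hb3 : b.length = 3 := by omega
    obtain ⟨b0, b1, b2, rfl⟩ := List.length_eq_three.1 hb3
    have hb1 : b1 = 1 := by
      have hmm : ∀ (u : Matrix (Fin 2) (Fin 2) F), mProd [b0, b1, b2] = u →
          mProd [b0, b1, b2] 1 1 = u 1 1 := fun u h => by rw [h]
      rcases hbq.2 with h | h <;> have := hmm _ h <;>
        · rw [mProd] at this
          simp only [List.map_cons, List.map_nil, List.reverse_cons, List.reverse_nil,
            List.nil_append, List.cons_append, List.prod_cons, List.prod_nil, mul_one] at this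
          simp [mMat, Matrix.mul_apply, Fin.sum_univ_two, Matrix.one_apply] at this
          first
          | linear_combination this
          | linear_combination this - h2
          | linear_combination this + h2
          | linear_combination -this - h2
    have hmem : b1 ∈ oplus a [b0, b1, b2] := by
      rw [oplus]
      simp
    have : b1 ∈ ([0, 0, 0, 0] : List F) := by
      rcases heq with ⟨k, hk⟩ | ⟨k, hk⟩ <;> rw [hk] at hmem
      · exact List.mem_rotate.1 hmem
      · exact List.mem_reverse.1 (List.mem_rotate.1 hmem)
    simp at this
    rw [this] at hb1
    exact one_ne_zero hb1.symm

/-- Over a finite field `F` with `q = 2^m` elements, there is an irreducible λ-quiddity of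
size 4 and every irreducible λ-quiddity has size at most `q² + 1`. -/
theorem stmt4 {F : Type*} [Field F] [Fintype F] (m : ℕ) (hm : 0 < m)
    (hq : Fintype.card F = 2 ^ m) :
    (∃ c : List F, IrreducibleQuiddity Set.univ c ∧ c.length = 4) ∧
    (∀ c : List F, IrreducibleQuiddity Set.univ c →
      c.length ≤ Fintype.card F ^ 2 + 1) := by
  have h2 : (2 : F) = 0 := by
    have h := FiniteField.cast_card_eq_zero F
    rw [hq] at h
    push_cast at h
    exact pow_eq_zero_iff hm.ne' |>.1 h
  constructor
  · exact ⟨[0, 0, 0, 0], four_zeros h2, rfl⟩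
  · intro c hc
    classical
    by_contra hlt
    push_neg at hlt
    obtain ⟨hcq, hc3, hnred⟩ := hc
    apply hnred
    set n := c.length with hn
    have hq1 : 1 ≤ Fintype.card F := Fintype.card_pos
    have hcard : (Finset.univ.erase ((0, 0) : F × F)).card < (Finset.range (n - 2)).card := by
      rw [Finset.card_erase_of_mem (Finset.mem_univ _), Finset.card_univ, Finset.card_range]
      have : Fintype.card (F × F) = Fintype.card F ^ 2 := by
        rw [Fintype.card_prod, sq]
      rw [this]
      have : 1 ≤ Fintype.card F ^ 2 := Nat.one_le_pow _ _ hq1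
      omega
    have hmaps : ∀ k ∈ Finset.range (n - 2),
        (fun k => ((mProd (c.take k)) 0 0, (mProd (c.take k)) 0 1)) k
          ∈ Finset.univ.erase ((0, 0) : F × F) := by
      intro k _
      refine Finset.mem_erase.2 ⟨?_, Finset.mem_univ _⟩
      intro h
      have h0 : (mProd (c.take k)) 0 0 = 0 := congrArg Prod.fst h
      have h1 : (mProd (c.take k)) 0 1 = 0 := congrArg Prod.snd h
      have hd := mProd_det (c.take k)
      rw [Matrix.det_fin_two, h0, h1] at hd
      simp at hd
    obtain ⟨i, hi, j, hj, hne, hfe⟩ :=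
      Finset.exists_ne_map_eq_of_card_lt_of_maps_to hcard hmaps
    simp only [Finset.mem_range] at hi hj
    have h00 := congrArg Prod.fst hfe
    have h01 := congrArg Prod.snd hfe
    simp only at h00 h01
    rcases hne.lt_or_gt with h | h
    · exact reducible_of_rep h2 c i j h (by omega) h00 h01
    · exact reducible_of_rep h2 c j i h (by omega) h00.symm h01.symm
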